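/- The rational triangle with vertices (5,-1), (-1,-1), (-1,1/2) and the lattice triangle with vertices (2,-1), (-1,-1), (-1,2) have the same number of lattice points in every nonnegative integer dilate. -/

import Mathlib

open Pointwise Finset

section Aux

set_option linter.unnecessarySeqFocus false

private lemma combo_mem' (A B C : ℚ × ℚ) {a b c : ℚ} (ha : 0 ≤ a) (hb : 0 ≤ b) (hc : 0 ≤ c)
    (habc : a + b + c = 1) :
    a • A + b • B + c • C ∈ convexHull ℚ ({A, B, C} : Set (ℚ × ℚ)) := by
  have hA : A ∈ convexHull ℚ ({A, B, C} : Set (ℚ × ℚ)) := subset_convexHull _ _ (by simp)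
  have hB : B ∈ convexHull ℚ ({A, B, C} : Set (ℚ × ℚ)) := subset_convexHull _ _ (by simp)
  have hC : C ∈ convexHull ℚ ({A, B, C} : Set (ℚ × ℚ)) := subset_convexHull _ _ (by simp)
  have hconv := convex_convexHull ℚ ({A, B, C} : Set (ℚ × ℚ))
  rcases eq_or_lt_of_le (by linarith : (0:ℚ) ≤ b + c) with h | h
  · have hb0 : b = 0 := by linarith
    have hc0 : c = 0 := by linarith
    have ha1 : a = 1 := by linarith
    simpa [hb0, hc0, ha1] using hA
  · have hw : (b/(b+c)) • B + (c/(b+c)) • C ∈ convexHull ℚ ({A, B, C} : Set (ℚ × ℚ)) :=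
      hconv hB hC (div_nonneg hb h.le) (div_nonneg hc h.le) (by field_simp)
    have hz := hconv (a := a) (b := b + c) hA hw ha (by linarith) (by linarith)
    have : a • A + (b+c) • ((b/(b+c)) • B + (c/(b+c)) • C) = a • A + b • B + c • C := by
      rw [smul_add, smul_smul, smul_smul]
      rw [mul_div_cancel₀ _ h.ne', mul_div_cancel₀ _ h.ne', add_assoc]
    rwa [this] at hz

private lemma memP' (c : ℚ) (hc : 0 < c) (z : ℚ × ℚ) :
    z ∈ convexHull ℚ ({(5*c, -c), (-c, -c), (-c, c/2)} : Set (ℚ × ℚ)) ↔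
      -z.1 ≤ c ∧ -z.2 ≤ c ∧ z.1 + 4*z.2 ≤ c := by
  constructor
  · intro hz
    have hsub : convexHull ℚ ({(5*c, -c), (-c, -c), (-c, c/2)} : Set (ℚ × ℚ)) ⊆
        {q : ℚ × ℚ | -q.1 ≤ c ∧ -q.2 ≤ c ∧ q.1 + 4*q.2 ≤ c} := by
      apply convexHull_min
      · rintro q hq
        simp only [Set.mem_insert_iff, Set.mem_singleton_iff] at hq
        rcases hq with rfl | rfl | rfl <;>
          refine ⟨by norm_num <;> linarith, by norm_num <;> linarith, by norm_num <;> linarith⟩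
      · rintro ⟨x1, x2⟩ ⟨hx1, hx2, hx3⟩ ⟨y1, y2⟩ ⟨hy1, hy2, hy3⟩ a b ha hb hab
        simp only [Set.mem_setOf_eq, Prod.smul_mk, Prod.mk_add_mk, smul_eq_mul] at *
        refine ⟨by nlinarith, by nlinarith, by nlinarith⟩
    exact hsub hz
  · rintro ⟨h1, h2, h3⟩
    have key := combo_mem' ((5*c, -c) : ℚ × ℚ) (-c, -c) (-c, c/2)
      (a := (z.1 + c)/(6*c)) (b := (c - z.1 - 4*z.2)/(6*c)) (c := (2*z.2 + 2*c)/(3*c))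
      (div_nonneg (by linarith) (by linarith)) (div_nonneg (by linarith) (by linarith))
      (div_nonneg (by linarith) (by linarith)) (by field_simp; ring)
    have heq : ((z.1 + c)/(6*c)) • ((5*c, -c) : ℚ × ℚ)
        + ((c - z.1 - 4*z.2)/(6*c)) • ((-c, -c) : ℚ × ℚ)
        + ((2*z.2 + 2*c)/(3*c)) • ((-c, c/2) : ℚ × ℚ) = z := by
      apply Prod.ext <;>
        simp only [Prod.smul_mk, Prod.mk_add_mk, smul_eq_mul, Prod.fst, Prod.snd] <;>
        field_simp <;> ring
    rwa [heq] at key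

private lemma memQ' (c : ℚ) (hc : 0 < c) (z : ℚ × ℚ) :
    z ∈ convexHull ℚ ({(2*c, -c), (-c, -c), (-c, 2*c)} : Set (ℚ × ℚ)) ↔
      -z.1 ≤ c ∧ -z.2 ≤ c ∧ z.1 + z.2 ≤ c := by
  constructor
  · intro hz
    have hsub : convexHull ℚ ({(2*c, -c), (-c, -c), (-c, 2*c)} : Set (ℚ × ℚ)) ⊆
        {q : ℚ × ℚ | -q.1 ≤ c ∧ -q.2 ≤ c ∧ q.1 + q.2 ≤ c} := by
      apply convexHull_min
      · rintro q hq
        simp only [Set.mem_insert_iff, Set.mem_singleton_iff] at hq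
        rcases hq with rfl | rfl | rfl <;>
          refine ⟨by norm_num <;> linarith, by norm_num <;> linarith, by norm_num <;> linarith⟩
      · rintro ⟨x1, x2⟩ ⟨hx1, hx2, hx3⟩ ⟨y1, y2⟩ ⟨hy1, hy2, hy3⟩ a b ha hb hab
        simp only [Set.mem_setOf_eq, Prod.smul_mk, Prod.mk_add_mk, smul_eq_mul] at *
        refine ⟨by nlinarith, by nlinarith, by nlinarith⟩
    exact hsub hz
  · rintro ⟨h1, h2, h3⟩
    have key := combo_mem' ((2*c, -c) : ℚ × ℚ) (-c, -c) (-c, 2*c)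
      (a := (z.1 + c)/(3*c)) (b := (c - z.1 - z.2)/(3*c)) (c := (z.2 + c)/(3*c))
      (div_nonneg (by linarith) (by linarith)) (div_nonneg (by linarith) (by linarith))
      (div_nonneg (by linarith) (by linarith)) (by field_simp; ring)
    have heq : ((z.1 + c)/(3*c)) • ((2*c, -c) : ℚ × ℚ)
        + ((c - z.1 - z.2)/(3*c)) • ((-c, -c) : ℚ × ℚ)
        + ((z.2 + c)/(3*c)) • ((-c, 2*c) : ℚ × ℚ) = z := by
      apply Prod.ext <;>
        simp only [Prod.smul_mk, Prod.mk_add_mk, smul_eq_mul, Prod.fst, Prod.snd] <;>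
        field_simp <;> ring
    rwa [heq] at key

private lemma sum_lin_mul_two' (N r : ℕ) :
    (∑ i ∈ range N, (4*i + r)) * 2 = 4*(N*(N-1)) + 2*N*r := by
  rw [sum_add_distrib, ← mul_sum, sum_const, card_range, smul_eq_mul, add_mul,
    mul_assoc, sum_range_id_mul_two]
  ring

private lemma sumQarith' (k : ℕ) :
    (∑ y ∈ Finset.Icc (-(k:ℤ)) (2*(k:ℤ)), ((k:ℤ) - y + 1 - -(k:ℤ)).toNat) * 2
      = (3*k+1) * (3*k+2) := by
  have h : (∑ y ∈ Finset.Icc (-(k:ℤ)) (2*(k:ℤ)), ((k:ℤ) - y + 1 - -(k:ℤ)).toNat)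
      = ∑ i ∈ range (3*k+1), (i + 1) := by
    apply Finset.sum_nbij' (i := fun y => (2*(k:ℤ) - y).toNat) (j := fun i => 2*(k:ℤ) - i)
    · intro y hy; simp only [mem_Icc] at hy; simp only [mem_range]; omega
    · intro i hi; simp only [mem_range] at hi; simp only [mem_Icc]; omega
    · intro y hy; simp only [mem_Icc] at hy; omega
    · intro i hi; simp only [mem_range] at hi; omega
    · intro y hy; simp only [mem_Icc] at hy; omega
  rw [h, sum_add_distrib, sum_const, card_range, smul_eq_mul, mul_one, add_mul,
    sum_range_id_mul_two, Nat.add_sub_cancel]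
  ring

private lemma sumParith' (k : ℕ) :
    (∑ y ∈ Finset.Icc (-(k:ℤ)) (k:ℤ), ((k:ℤ) - 4*y + 1 - -(k:ℤ)).toNat) * 2
      = (3*k+1) * (3*k+2) := by
  rcases Nat.even_or_odd k with ⟨m, hm⟩ | ⟨m, hm⟩
  · subst hm
    have hres : (∑ y ∈ Finset.Icc (-((m+m:ℕ):ℤ)) ((m+m:ℕ):ℤ),
          (((m+m:ℕ):ℤ) - 4*y + 1 - -((m+m:ℕ):ℤ)).toNat)
        = ∑ y ∈ Finset.Icc (-((m+m:ℕ):ℤ)) (m:ℤ),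
          (((m+m:ℕ):ℤ) - 4*y + 1 - -((m+m:ℕ):ℤ)).toNat := by
      refine (Finset.sum_subset (Finset.Icc_subset_Icc_right (by push_cast; omega)) ?_).symm
      intro y hy hy'
      simp only [mem_Icc] at hy hy'
      omega
    rw [hres]
    have h2 : (∑ y ∈ Finset.Icc (-((m+m:ℕ):ℤ)) (m:ℤ),
          (((m+m:ℕ):ℤ) - 4*y + 1 - -((m+m:ℕ):ℤ)).toNat)
        = ∑ i ∈ range (3*m+1), (4*i + 1) := by
      apply Finset.sum_nbij' (i := fun y => ((m:ℤ) - y).toNat) (j := fun i => (m:ℤ) - i)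
      · intro y hy; simp only [mem_Icc] at hy; simp only [mem_range]; omega
      · intro i hi; simp only [mem_range] at hi; simp only [mem_Icc]; omega
      · intro y hy; simp only [mem_Icc] at hy; omega
      · intro i hi; simp only [mem_range] at hi; omega
      · intro y hy; simp only [mem_Icc] at hy; omega
    rw [h2, sum_lin_mul_two', Nat.add_sub_cancel]
    ring
  · subst hm
    have hres : (∑ y ∈ Finset.Icc (-((2*m+1:ℕ):ℤ)) ((2*m+1:ℕ):ℤ),
          (((2*m+1:ℕ):ℤ) - 4*y + 1 - -((2*m+1:ℕ):ℤ)).toNat)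
        = ∑ y ∈ Finset.Icc (-((2*m+1:ℕ):ℤ)) (m:ℤ),
          (((2*m+1:ℕ):ℤ) - 4*y + 1 - -((2*m+1:ℕ):ℤ)).toNat := by
      refine (Finset.sum_subset (Finset.Icc_subset_Icc_right (by push_cast; omega)) ?_).symm
      intro y hy hy'
      simp only [mem_Icc] at hy hy'
      omega
    rw [hres]
    have h2 : (∑ y ∈ Finset.Icc (-((2*m+1:ℕ):ℤ)) (m:ℤ),
          (((2*m+1:ℕ):ℤ) - 4*y + 1 - -((2*m+1:ℕ):ℤ)).toNat)
        = ∑ i ∈ range (3*m+2), (4*i + 3) := by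
      apply Finset.sum_nbij' (i := fun y => ((m:ℤ) - y).toNat) (j := fun i => (m:ℤ) - i)
      · intro y hy; simp only [mem_Icc] at hy; simp only [mem_range]; omega
      · intro i hi; simp only [mem_range] at hi; simp only [mem_Icc]; omega
      · intro y hy; simp only [mem_Icc] at hy; omega
      · intro i hi; simp only [mem_range] at hi; omega
      · intro y hy; simp only [mem_Icc] at hy; omega
    rw [h2, sum_lin_mul_two']
    have : 3*m+2-1 = 3*m+1 := rfl
    rw [this]; ring

private def emb' (y : ℤ) : ℤ ↪ ℤ × ℤ := ⟨fun x => (x, y), fun a b h => by simpa using h⟩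

private lemma card_rows' (k : ℕ) (N : ℤ) (f : ℤ → ℤ) :
    {p : ℤ × ℤ | -(k:ℤ) ≤ p.2 ∧ p.2 ≤ N ∧ -(k:ℤ) ≤ p.1 ∧ p.1 ≤ f p.2}.ncard
      = ∑ y ∈ Finset.Icc (-(k:ℤ)) N, (f y + 1 - -(k:ℤ)).toNat := by
  have hset : {p : ℤ × ℤ | -(k:ℤ) ≤ p.2 ∧ p.2 ≤ N ∧ -(k:ℤ) ≤ p.1 ∧ p.1 ≤ f p.2}
      = ↑((Finset.Icc (-(k:ℤ)) N).biUnion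
          (fun y => (Finset.Icc (-(k:ℤ)) (f y)).map (emb' y))) := by
    ext ⟨x, y⟩
    simp only [Set.mem_setOf_eq, coe_biUnion, mem_coe, mem_Icc, Set.mem_iUnion,
      Finset.mem_map, emb', Function.Embedding.coeFn_mk, Prod.mk.injEq]
    constructor
    · rintro ⟨h1, h2, h3, h4⟩
      exact ⟨y, ⟨h1, h2⟩, x, ⟨h3, h4⟩, rfl⟩
    · rintro ⟨b, hb, a, ha, rfl, rfl⟩
      exact ⟨hb.1, hb.2, ha.1, ha.2⟩
  rw [hset, Set.ncard_coe_finset, Finset.card_biUnion]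
  · refine Finset.sum_congr rfl fun y _ => ?_
    rw [Finset.card_map, Int.card_Icc]
  · intro a _ b _ hab
    simp only [Finset.disjoint_left]
    rintro ⟨x, y⟩ hx hy
    simp only [Finset.mem_map, emb', Function.Embedding.coeFn_mk, Prod.mk.injEq] at hx hy
    obtain ⟨_, _, hx'⟩ := hx
    obtain ⟨_, _, hy'⟩ := hy
    exact hab ((congrArg Prod.snd hx').trans (congrArg Prod.snd hy').symm)

end Aux

/-- The rational triangle conv{(5,-1),(-1,-1),(-1,1/2)} and the lattice triangle
conv{(2,-1),(-1,-1),(-1,2)} have the same number of lattice points in every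
nonnegative integer dilate. -/
theorem stmt2 :
    let P : Set (ℚ × ℚ) := convexHull ℚ {((5 : ℚ), (-1 : ℚ)), (-1, -1), (-1, 1/2)}
    let Q : Set (ℚ × ℚ) := convexHull ℚ {((2 : ℚ), (-1 : ℚ)), (-1, -1), (-1, 2)}
    ∀ k : ℕ,
      Set.ncard {p : ℤ × ℤ | ((p.1 : ℚ), (p.2 : ℚ)) ∈ (k : ℚ) • P} =
        Set.ncard {p : ℤ × ℤ | ((p.1 : ℚ), (p.2 : ℚ)) ∈ (k : ℚ) • Q} := by
  intro P Q k
  rcases Nat.eq_zero_or_pos k with rfl | hk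
  · have hPne : P.Nonempty := ⟨(5, -1), subset_convexHull _ _ (by simp)⟩
    have hQne : Q.Nonempty := ⟨(2, -1), subset_convexHull _ _ (by simp)⟩
    have : ((0:ℕ) : ℚ) • P = ((0:ℕ) : ℚ) • Q := by
      rw [Nat.cast_zero, Set.zero_smul_set hPne, Set.zero_smul_set hQne]
    rw [this]
  · have hkpos : (0:ℚ) < (k:ℚ) := by exact_mod_cast hk
    -- scaling identities
    have hscaleP : (k : ℚ) • P =
        convexHull ℚ ({(5*(k:ℚ), -(k:ℚ)), (-(k:ℚ), -(k:ℚ)), (-(k:ℚ), (k:ℚ)/2)} : Set (ℚ × ℚ)) := by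
      show (k : ℚ) • (convexHull ℚ {((5 : ℚ), (-1 : ℚ)), (-1, -1), (-1, 1/2)}) = _
      rw [← convexHull_smul]
      congr 1
      simp only [Set.smul_set_insert, Set.smul_set_singleton, Prod.smul_mk, smul_eq_mul,
        mul_one, mul_neg, mul_comm (k:ℚ) 5]
      norm_num [mul_one_div]
    have hscaleQ : (k : ℚ) • Q =
        convexHull ℚ ({(2*(k:ℚ), -(k:ℚ)), (-(k:ℚ), -(k:ℚ)), (-(k:ℚ), 2*(k:ℚ))} : Set (ℚ × ℚ)) := by
      show (k : ℚ) • (convexHull ℚ {((2 : ℚ), (-1 : ℚ)), (-1, -1), (-1, 2)}) = _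
      rw [← convexHull_smul]
      congr 1
      simp only [Set.smul_set_insert, Set.smul_set_singleton, Prod.smul_mk, smul_eq_mul,
        mul_one, mul_neg, mul_comm (k:ℚ) 5]
      norm_num [mul_comm]
    -- describe the lattice point sets by integer inequalities
    have hsetP : {p : ℤ × ℤ | ((p.1 : ℚ), (p.2 : ℚ)) ∈ (k : ℚ) • P}
        = {p : ℤ × ℤ | -(k:ℤ) ≤ p.2 ∧ p.2 ≤ (k:ℤ) ∧ -(k:ℤ) ≤ p.1 ∧ p.1 ≤ (k:ℤ) - 4*p.2} := by
      ext p
      rw [Set.mem_setOf_eq, Set.mem_setOf_eq, hscaleP, memP' _ hkpos]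
      show (-(p.1:ℚ) ≤ (k:ℚ) ∧ -(p.2:ℚ) ≤ (k:ℚ) ∧ (p.1:ℚ) + 4*(p.2:ℚ) ≤ (k:ℚ)) ↔ _
      constructor
      · rintro ⟨h1, h2, h3⟩
        have H1 : -p.1 ≤ (k:ℤ) := by exact_mod_cast h1
        have H2 : -p.2 ≤ (k:ℤ) := by exact_mod_cast h2
        have H3 : p.1 + 4*p.2 ≤ (k:ℤ) := by exact_mod_cast h3
        omega
      · rintro ⟨h1, h2, h3, h4⟩
        refine ⟨?_, ?_, ?_⟩
        · exact_mod_cast (by omega : -p.1 ≤ (k:ℤ))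
        · exact_mod_cast (by omega : -p.2 ≤ (k:ℤ))
        · exact_mod_cast (by omega : p.1 + 4*p.2 ≤ (k:ℤ))
    have hsetQ : {p : ℤ × ℤ | ((p.1 : ℚ), (p.2 : ℚ)) ∈ (k : ℚ) • Q}
        = {p : ℤ × ℤ | -(k:ℤ) ≤ p.2 ∧ p.2 ≤ 2*(k:ℤ) ∧ -(k:ℤ) ≤ p.1 ∧ p.1 ≤ (k:ℤ) - p.2} := by
      ext p
      rw [Set.mem_setOf_eq, Set.mem_setOf_eq, hscaleQ, memQ' _ hkpos]
      show (-(p.1:ℚ) ≤ (k:ℚ) ∧ -(p.2:ℚ) ≤ (k:ℚ) ∧ (p.1:ℚ) + (p.2:ℚ) ≤ (k:ℚ)) ↔ _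
      constructor
      · rintro ⟨h1, h2, h3⟩
        have H1 : -p.1 ≤ (k:ℤ) := by exact_mod_cast h1
        have H2 : -p.2 ≤ (k:ℤ) := by exact_mod_cast h2
        have H3 : p.1 + p.2 ≤ (k:ℤ) := by exact_mod_cast h3
        omega
      · rintro ⟨h1, h2, h3, h4⟩
        refine ⟨?_, ?_, ?_⟩
        · exact_mod_cast (by omega : -p.1 ≤ (k:ℤ))
        · exact_mod_cast (by omega : -p.2 ≤ (k:ℤ))
        · exact_mod_cast (by omega : p.1 + p.2 ≤ (k:ℤ))
    rw [hsetP, hsetQ, card_rows' k (k:ℤ) (fun y => (k:ℤ) - 4*y),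
      card_rows' k (2*(k:ℤ)) (fun y => (k:ℤ) - y)]
    refine Nat.eq_of_mul_eq_mul_right (show 0 < 2 by norm_num) ?_
    rw [sumParith' k, sumQarith' k]
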